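/- A linear operator ∇ on π₂ is a local derivation of π₂ if and only if there exist complex numbers b₁₁, b₂₁, b₂₂, b₃₁, b₃₂, b₃₃, b₃₄, b₄₁, b₅₁, b₅₂, b₅₄ such that the matrix of ∇ is [[b₁₁,0,0,0,0],[b₂₁,b₂₂,0,0,0],[b₃₁,b₃₂,b₃₃,b₃₄,0],[b₄₁,0,0,b₄₁+b₁₁,0],[b₅₁,b₅₂,0,b₅₄,b₂₂+b₅₂]]. -/

import Mathlib

noncomputable section

/-- The multiplication of the 5-dimensional naturally graded nilpotent associative
algebra `π₂`, given on the basis `e₁, …, e₅` (indices `0, …, 4`) by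
`e₁e₁ = e₂`, `e₁e₂ = e₂e₁ = e₃`, `e₁e₄ = e₄e₁ = e₅`, `e₄e₄ = e₅`. -/
def pi2Mul (x y : Fin 5 → ℂ) : Fin 5 → ℂ :=
  ![0, x 0 * y 0, x 0 * y 1 + x 1 * y 0, 0, x 0 * y 3 + x 3 * y 0 + x 3 * y 3]

/-- A derivation of `π₂`: a linear operator satisfying the Leibniz rule. -/
def IsPi2Der (D : (Fin 5 → ℂ) →ₗ[ℂ] (Fin 5 → ℂ)) : Prop :=
  ∀ x y, D (pi2Mul x y) = pi2Mul (D x) y + pi2Mul x (D y)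

/-- A local derivation of `π₂`: a linear operator that agrees at every point with
some derivation (depending on the point). -/
def IsPi2LocDer (f : (Fin 5 → ℂ) →ₗ[ℂ] (Fin 5 → ℂ)) : Prop :=
  ∀ x : Fin 5 → ℂ, ∃ D : (Fin 5 → ℂ) →ₗ[ℂ] (Fin 5 → ℂ), IsPi2Der D ∧ f x = D x

/-- The general derivation matrix of `π₂`, with 7 free parameters. -/
def derMat (u w p v q r s : ℂ) : Matrix (Fin 5) (Fin 5) ℂ :=
  !![u,0,0,0,0; w,2*u,0,0,0; p,2*w,3*u,r,0; v,0,0,u+v,0; q,2*v,0,s,2*u+2*v]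

lemma derMat_isDer (u w p v q r s : ℂ) : IsPi2Der (Matrix.toLin' (derMat u w p v q r s)) := by
  intro x y
  funext i
  fin_cases i <;>
    simp [pi2Mul, derMat, Matrix.toLin'_apply, Matrix.mulVec, dotProduct,
      Fin.sum_univ_five] <;> ring

/-- basis vector, in the shape used by `LinearMap.toMatrix'_apply` -/
def E (j : Fin 5) : Fin 5 → ℂ := fun j' => if j' = j then 1 else 0

lemma hE00 : pi2Mul (E 0) (E 0) = E 1 := by funext i; fin_cases i <;> simp [pi2Mul, E]
lemma hE01 : pi2Mul (E 0) (E 1) = E 2 := by funext i; fin_cases i <;> simp [pi2Mul, E]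
lemma hE03 : pi2Mul (E 0) (E 3) = E 4 := by funext i; fin_cases i <;> simp [pi2Mul, E]
lemma hE33 : pi2Mul (E 3) (E 3) = E 4 := by funext i; fin_cases i <;> simp [pi2Mul, E]

lemma der_facts (D : (Fin 5 → ℂ) →ₗ[ℂ] (Fin 5 → ℂ)) (hD : IsPi2Der D) :
    (D (E 1) 0 = 0 ∧ D (E 1) 1 = 2 * D (E 0) 0 ∧ D (E 1) 2 = 2 * D (E 0) 1 ∧
      D (E 1) 3 = 0 ∧ D (E 1) 4 = 2 * D (E 0) 3) ∧
    (D (E 2) 0 = 0 ∧ D (E 2) 1 = 0 ∧ D (E 2) 2 = 3 * D (E 0) 0 ∧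
      D (E 2) 3 = 0 ∧ D (E 2) 4 = 0) ∧
    (D (E 3) 0 = 0 ∧ D (E 3) 1 = 0 ∧ D (E 3) 3 = D (E 0) 0 + D (E 0) 3) ∧
    (D (E 4) 0 = 0 ∧ D (E 4) 1 = 0 ∧ D (E 4) 2 = 0 ∧ D (E 4) 3 = 0 ∧
      D (E 4) 4 = 2 * (D (E 0) 0 + D (E 0) 3)) := by
  have h2 := hD (E 0) (E 0); rw [hE00] at h2
  have h3 := hD (E 0) (E 1); rw [hE01] at h3
  have h5 := hD (E 0) (E 3); rw [hE03] at h5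
  have h5' := hD (E 3) (E 3); rw [hE33] at h5'
  have a1 := congrFun h5 1; have b1 := congrFun h5' 1
  have a2 := congrFun h5 2; have b2 := congrFun h5' 2
  have a4 := congrFun h5 4; have b4 := congrFun h5' 4
  have b0 := congrFun h5' 0; have b3 := congrFun h5' 3
  simp [pi2Mul, E] at a1 b1 a2 b2 a4 b4 b0 b3
  have w0 : D (E 3) 0 = 0 := by rw [a1] at b1; exact b1
  have w1 : D (E 3) 1 = 0 := by rw [a2] at b2; exact b2
  have w3 : D (E 3) 3 = D (E 0) 0 + D (E 0) 3 := by
    rw [b4, w0] at a4; linear_combination a4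
  have c0 := congrFun h2 0; have c1 := congrFun h2 1; have c2 := congrFun h2 2
  have c3 := congrFun h2 3; have c4 := congrFun h2 4
  simp [pi2Mul, E] at c0 c1 c2 c3 c4
  have d0 := congrFun h3 0; have d1 := congrFun h3 1; have d2 := congrFun h3 2
  have d3 := congrFun h3 3; have d4 := congrFun h3 4
  simp [pi2Mul, E] at d0 d1 d2 d3 d4
  refine ⟨⟨c0, by rw [c1]; ring, by rw [c2]; ring, c3, by rw [c4]; ring⟩,
    ⟨d0, by rw [d1, c0], by rw [d2, c1]; ring, d3, by rw [d4, c3]⟩,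
    ⟨w0, w1, w3⟩,
    ⟨b0, b1, by rw [a2, w1], b3, by rw [b4, w0, w3]; ring⟩⟩

set_option maxHeartbeats 1000000 in
lemma bwd_aux (b11 b21 b22 b31 b32 b33 b34 b41 b51 b52 b54 : ℂ) (x : Fin 5 → ℂ) :
    ∃ u w p v q r s : ℂ,
      Matrix.mulVec (!![b11, 0, 0, 0, 0;
             b21, b22, 0, 0, 0;
             b31, b32, b33, b34, 0;
             b41, 0, 0, b41 + b11, 0;
             b51, b52, 0, b54, b22 + b52]) x = Matrix.mulVec (derMat u w p v q r s) x := by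
  by_cases h0 : x 0 = 0
  · by_cases h3 : x 3 = 0
    · by_cases h1 : x 1 = 0
      · by_cases h2 : x 2 = 0
        · refine ⟨(b22+b52)/2, 0, 0, 0, 0, 0, 0, ?_⟩
          funext i
          fin_cases i <;>
            simp [derMat, Matrix.mulVec, dotProduct, Fin.sum_univ_five, h0, h1, h2, h3, -mul_eq_mul_right_iff] <;>
            (try ring)
        · refine ⟨b33/3, 0, 0, (b22+b52)/2 - b33/3, 0, 0, 0, ?_⟩
          funext i
          fin_cases i <;>
            simp [derMat, Matrix.mulVec, dotProduct, Fin.sum_univ_five, h0, h1, h3, -mul_eq_mul_right_iff] <;>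
            (try ring)
      · refine ⟨b22/2, (b32*x 1 + b33*x 2 - (3*b22/2)*x 2)/(2*x 1), 0, b52/2, 0, 0, 0, ?_⟩
        funext i
        fin_cases i <;>
          simp [derMat, Matrix.mulVec, dotProduct, Fin.sum_univ_five, h0, h3, -mul_eq_mul_right_iff] <;>
          (try field_simp) <;> (try ring) <;> (try tauto)
    · refine ⟨b22/2, 0, 0, b41 + b11 - b22/2, 0,
        (b32*x 1 + b33*x 2 + b34*x 3 - (3*b22/2)*x 2)/x 3,
        (b52*x 1 + b54*x 3 + (b22+b52)*x 4 - 2*(b41+b11-b22/2)*x 1 - (2*b41+2*b11)*x 4)/x 3, ?_⟩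
      funext i
      fin_cases i <;>
        simp [derMat, Matrix.mulVec, dotProduct, Fin.sum_univ_five, h0, -mul_eq_mul_right_iff] <;>
        (try field_simp) <;> (try ring)
  · refine ⟨b11, (b21*x 0 + (b22 - 2*b11)*x 1)/x 0,
      (b31*x 0^2 + b32*x 1*x 0 + b33*x 2*x 0 - 2*(b21*x 0 + (b22-2*b11)*x 1)*x 1 - 3*b11*x 2*x 0)/x 0^2,
      b41,
      (b51*x 0 + b52*x 1 + (b22+b52)*x 4 - 2*b41*x 1 - (2*b11+2*b41)*x 4)/x 0,
      b34, b54, ?_⟩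
    funext i
    fin_cases i <;>
      simp [derMat, Matrix.mulVec, dotProduct, Fin.sum_univ_five, -mul_eq_mul_right_iff] <;>
      (try tauto) <;> (try field_simp) <;> (try ring) <;> (try tauto)

theorem pi2_locDer_iff (f : (Fin 5 → ℂ) →ₗ[ℂ] (Fin 5 → ℂ)) :
    IsPi2LocDer f ↔
      ∃ b11 b21 b22 b31 b32 b33 b34 b41 b51 b52 b54 : ℂ,
        LinearMap.toMatrix' f =
          !![b11, 0, 0, 0, 0;
             b21, b22, 0, 0, 0;
             b31, b32, b33, b34, 0;
             b41, 0, 0, b41 + b11, 0;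
             b51, b52, 0, b54, b22 + b52] := by
  constructor
  · intro hf
    set M := LinearMap.toMatrix' f with hM
    have hMa : ∀ i j, M i j = f (E j) i := by
      intro i j; rw [hM, LinearMap.toMatrix'_apply]; have hPE : (Pi.single j 1 : Fin 5 → ℂ) = E j := by funext j'; simp [E, Pi.single_apply]
      rw [hPE]
    obtain ⟨D1, hD1, h1⟩ := hf (E 1)
    obtain ⟨D2, hD2, h2⟩ := hf (E 2)
    obtain ⟨D3, hD3, h3⟩ := hf (E 3)
    obtain ⟨D4, hD4, h4⟩ := hf (E 4)
    obtain ⟨Da, hDa, ha⟩ := hf (E 0 - E 3)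
    obtain ⟨Db, hDb, hb⟩ := hf (E 1 - E 4)
    have F1 := der_facts D1 hD1
    have F2 := der_facts D2 hD2
    have F3 := der_facts D3 hD3
    have F4 := der_facts D4 hD4
    have Fa := der_facts Da hDa
    have Fb := der_facts Db hDb
    -- zero entries
    have z01 : M 0 1 = 0 := by rw [hMa, h1]; exact F1.1.1
    have z31 : M 3 1 = 0 := by rw [hMa, h1]; exact F1.1.2.2.2.1
    have z02 : M 0 2 = 0 := by rw [hMa, h2]; exact F2.2.1.1
    have z12 : M 1 2 = 0 := by rw [hMa, h2]; exact F2.2.1.2.1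
    have z32 : M 3 2 = 0 := by rw [hMa, h2]; exact F2.2.1.2.2.2.1
    have z42 : M 4 2 = 0 := by rw [hMa, h2]; exact F2.2.1.2.2.2.2
    have z03 : M 0 3 = 0 := by rw [hMa, h3]; exact F3.2.2.1.1
    have z13 : M 1 3 = 0 := by rw [hMa, h3]; exact F3.2.2.1.2.1
    have z04 : M 0 4 = 0 := by rw [hMa, h4]; exact F4.2.2.2.1
    have z14 : M 1 4 = 0 := by rw [hMa, h4]; exact F4.2.2.2.2.1
    have z24 : M 2 4 = 0 := by rw [hMa, h4]; exact F4.2.2.2.2.2.1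
    have z34 : M 3 4 = 0 := by rw [hMa, h4]; exact F4.2.2.2.2.2.2.1
    -- relation M 3 3 = M 3 0 + M 0 0
    have ea0 : f (E 0) 0 - f (E 3) 0 = Da (E 0) 0 - Da (E 3) 0 := by
      have := congrFun ha 0; simpa [map_sub, sub_eq_add_neg] using this
    have ea3 : f (E 0) 3 - f (E 3) 3 = Da (E 0) 3 - Da (E 3) 3 := by
      have := congrFun ha 3; simpa [map_sub, sub_eq_add_neg] using this
    have rel1 : M 3 3 = M 3 0 + M 0 0 := by
      rw [hMa, hMa, hMa]
      have hz : f (E 3) 0 = 0 := by rw [← hMa]; exact z03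
      rw [Fa.2.2.1.1, hz] at ea0
      rw [Fa.2.2.1.2.2] at ea3
      linear_combination -ea3 - ea0
    -- relation M 4 4 = M 1 1 + M 4 1
    have eb1 : f (E 1) 1 - f (E 4) 1 = Db (E 1) 1 - Db (E 4) 1 := by
      have := congrFun hb 1; simpa [map_sub, sub_eq_add_neg] using this
    have eb4 : f (E 1) 4 - f (E 4) 4 = Db (E 1) 4 - Db (E 4) 4 := by
      have := congrFun hb 4; simpa [map_sub, sub_eq_add_neg] using this
    have rel2 : M 4 4 = M 1 1 + M 4 1 := by
      rw [hMa, hMa, hMa]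
      have hz : f (E 4) 1 = 0 := by rw [← hMa]; exact z14
      rw [Fb.1.2.1, Fb.2.2.2.2.1, hz] at eb1
      rw [Fb.1.2.2.2.2, Fb.2.2.2.2.2.2.2] at eb4
      linear_combination -eb4 - eb1
    refine ⟨M 0 0, M 1 0, M 1 1, M 2 0, M 2 1, M 2 2, M 2 3, M 3 0, M 4 0, M 4 1, M 4 3, ?_⟩
    ext i j
    fin_cases i <;> fin_cases j <;>
      simp only [Matrix.cons_val', Matrix.cons_val_zero, Matrix.cons_val_one, Matrix.head_cons,
        Matrix.empty_val', Matrix.cons_val_fin_one, Matrix.head_fin_const, Matrix.cons_val_two,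
        Matrix.cons_val_three, Matrix.cons_val_four, Matrix.tail_cons, Matrix.head_fin_const,
        Matrix.of_apply, Fin.isValue] <;>
      first
        | rfl
        | exact z01 | exact z31 | exact z02 | exact z12 | exact z32 | exact z42
        | exact z03 | exact z13 | exact z04 | exact z14 | exact z24 | exact z34
        | exact rel1 | exact rel2
  · rintro ⟨b11, b21, b22, b31, b32, b33, b34, b41, b51, b52, b54, hB⟩
    intro x
    have hf : f = Matrix.toLin' (!![b11, 0, 0, 0, 0;
             b21, b22, 0, 0, 0;
             b31, b32, b33, b34, 0;
             b41, 0, 0, b41 + b11, 0;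
             b51, b52, 0, b54, b22 + b52]) := by
      rw [← hB, Matrix.toLin'_toMatrix']
    obtain ⟨u, w, p, v, q, r, s, hx⟩ := bwd_aux b11 b21 b22 b31 b32 b33 b34 b41 b51 b52 b54 x
    exact ⟨Matrix.toLin' (derMat u w p v q r s), derMat_isDer u w p v q r s, by
      rw [hf, Matrix.toLin'_apply, Matrix.toLin'_apply, hx]⟩
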